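/- Let M be a unitary magma. The partial composition on M-decorated cliques satisfies the parallel operad axiom: (x ∘_i y) ∘_{j+m-1} z = (x ∘_j z) ∘_i y for all i < j, where m is the arity of y. -/
import Mathlib


/-- The partial composition `p ∘_i q` of the clique operad `C M` over a unitary
magma `M`.  An `M`-decorated clique of arity `n` is encoded as a function
`p : ℕ → ℕ → M` whose relevant values are on the arcs `(x, y)` with
`1 ≤ x < y ≤ n + 1`; the base of `p` is the arc `(1, n + 1)` and its `i`-th edge
is the arc `(i, i + 1)`.  Here `m` is the arity of `q`. -/
def cliqComp {M : Type*} [Mul M] [One M] (i m : ℕ) (p q : ℕ → ℕ → M) :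
    ℕ → ℕ → M := fun x y =>
  if y ≤ i then p x y
  else if x ≤ i ∧ i < i + m ∧ i + m ≤ y ∧ ¬(x = i ∧ y = i + m) then p x (y - m + 1)
  else if i + m ≤ x then p (x - m + 1) (y - m + 1)
  else if i ≤ x ∧ x < y ∧ y ≤ i + m ∧ ¬(x = i ∧ y = i + m) then q (x - i + 1) (y - i + 1)
  else if x = i ∧ y = i + m then p i (i + 1) * q 1 (m + 1)
  else 1

set_option maxHeartbeats 4000000 in
/-- Parallel operad axiom for the clique operad `C M`:
`(p ∘_i q) ∘_{j+m-1} r = (p ∘_j r) ∘_i q` where `p, q, r` have respective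
arities `n, m, k` and `1 ≤ i < j ≤ n`; the equality holds on all the arcs
`(x, y)` with `1 ≤ x < y ≤ n + m + k - 1` of the resulting clique of arity
`n + m + k - 2`. -/
theorem cliqComp_parallel_axiom (M : Type) [MulOneClass M]
    (n m k i j : ℕ) (hn : 1 ≤ n) (hm : 1 ≤ m) (hk : 1 ≤ k)
    (hi : 1 ≤ i) (hij : i < j) (hj : j ≤ n)
    (p q r : ℕ → ℕ → M) (x y : ℕ)
    (hx : 1 ≤ x) (hxy : x < y) (hy : y ≤ n + m + k - 1) :
    cliqComp (j + m - 1) k (cliqComp i m p q) r x y =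
      cliqComp i m (cliqComp j k p r) q x y := by
  set A := cliqComp i m p q with hA
  set B := cliqComp j k p r with hB
  show cliqComp (j + m - 1) k A r x y = cliqComp i m B q x y
  unfold cliqComp
  split_ifs <;>
    first
    | rfl
    | omega
    | (simp only [hA, hB, cliqComp]
       split_ifs <;>
         first
         | rfl
         | omega
         | (congr 1 <;> first | rfl | omega | (congr 1 <;> omega)))
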